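/- For every natural number n ≥ 4, the dominated edge chromatic number of the wheel graph W_n on n vertices (the join of a single vertex with the cycle C_{n-1}) equals n - 1. -/

import Mathlib

open SimpleGraph

/-- Two edges of a simple graph are adjacent if they are distinct and share an endpoint. -/
def EdgeAdj {V : Type*} (G : SimpleGraph V) (e f : G.edgeSet) : Prop :=
  e ≠ f ∧ ∃ v, v ∈ (e : Sym2 V) ∧ v ∈ (f : Sym2 V)

/-- A dominated edge coloring of `G` with colors in `Fin n`: a proper edge coloring such that
every color class is dominated by some edge. -/
def IsDomEdgeColoring {V : Type*} (G : SimpleGraph V) {n : ℕ} (c : G.edgeSet → Fin n) : Prop :=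
  (∀ e f, EdgeAdj G e f → c e ≠ c f) ∧
  (∀ i : Fin n, ∃ e : G.edgeSet, ∀ f, c f = i → f = e ∨ EdgeAdj G e f)

/-- The dominated edge chromatic number: the least number of colors in a
dominated edge coloring. -/
noncomputable def domEdgeChrom {V : Type*} (G : SimpleGraph V) : ℕ :=
  sInf {n | ∃ c : G.edgeSet → Fin n, IsDomEdgeColoring G c}

/-- `D` is a total edge dominating set: every edge of `G` is adjacent to an edge of `D`. -/
def IsTotalEdgeDom {V : Type*} (G : SimpleGraph V) (D : Set G.edgeSet) : Prop :=
  ∀ e : G.edgeSet, ∃ f ∈ D, EdgeAdj G e f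

/-- The total edge domination number of `G`. -/
noncomputable def totalEdgeDomNumber {V : Type*} (G : SimpleGraph V) : ℕ :=
  sInf {n | ∃ D : Set G.edgeSet, D.Finite ∧ D.ncard = n ∧ IsTotalEdgeDom G D}

/-- The join `G + H` of two graphs: disjoint union together with all edges between them. -/
def graphJoin {α β : Type*} (G : SimpleGraph α) (H : SimpleGraph β) :
    SimpleGraph (α ⊕ β) :=
  SimpleGraph.fromRel (fun a b =>
    match a, b with
    | .inl u, .inl v => G.Adj u v
    | .inr u, .inr v => H.Adj u v
    | .inl _, .inr _ => True
    | .inr _, .inl _ => False)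

namespace Wheel

abbrev W (m : ℕ) := graphJoin (⊤ : SimpleGraph (Fin 1)) (SimpleGraph.cycleGraph m)

lemma W_adj_lr {m : ℕ} (x : Fin 1) (i : Fin m) : (W m).Adj (.inl x) (.inr i) := by
  simp [W, graphJoin, fromRel_adj]

lemma W_adj_rr {m : ℕ} {i j : Fin m} :
    (W m).Adj (.inr i) (.inr j) ↔ (cycleGraph m).Adj i j := by
  constructor
  · rintro ⟨hne, h | h⟩
    · exact h
    · exact h.symm
  · intro h
    exact ⟨by simp [h.ne], Or.inl h⟩

lemma W_not_adj_ll {m : ℕ} (x y : Fin 1) : ¬ (W m).Adj (.inl x) (.inl y) := by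
  rintro ⟨hne, _ | _⟩ <;> exact hne (by rw [Subsingleton.elim x y])

lemma W_edge_cases {m : ℕ} (e : Sym2 (Fin 1 ⊕ Fin m)) (he : e ∈ (W m).edgeSet) :
    (∃ i : Fin m, e = s(.inl 0, .inr i)) ∨
    (∃ i j : Fin m, (cycleGraph m).Adj i j ∧ e = s(.inr i, .inr j)) := by
  induction e with
  | _ a b =>
    rw [mem_edgeSet] at he
    match a, b with
    | .inl x, .inl y => exact absurd he (W_not_adj_ll x y)
    | .inl x, .inr i => exact Or.inl ⟨i, by rw [Fin.fin_one_eq_zero x]⟩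
    | .inr i, .inl x => exact Or.inl ⟨i, by rw [Fin.fin_one_eq_zero x, Sym2.eq_swap]⟩
    | .inr i, .inr j => exact Or.inr ⟨i, j, W_adj_rr.mp he, rfl⟩

variable {m : ℕ}

lemma two_val : ((2 : Fin (m+3)) : ℕ) = 2 := by simp
lemma l01 : (0 : Fin (m+3)) ≠ 1 := by simp [Fin.ext_iff]
lemma l02 : (0 : Fin (m+3)) ≠ 2 := by simp [Fin.ext_iff, two_val, Nat.mod_eq_of_lt (show 2 < m+3 by omega)]
lemma one_add_one : (1 : Fin (m+3)) + 1 = 2 := by rw [Fin.ext_iff, Fin.val_add]; simp [Nat.mod_eq_of_lt (show 1 < m+3 by omega), Nat.mod_eq_of_lt (show 2 < m+3 by omega)]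

lemma ne_add_one (i : Fin (m+3)) : i ≠ i + 1 := fun h => l01 (left_eq_add.mp h).symm
lemma ne_add_two (i : Fin (m+3)) : i ≠ i + 2 := fun h => l02 (left_eq_add.mp h).symm
lemma add_one_ne_add_two (i : Fin (m+3)) : i + 1 ≠ i + 2 := by
  intro h
  rw [← one_add_one, ← add_assoc] at h
  exact ne_add_one (i+1) h

def spoke (i : Fin (m+3)) : (W (m+3)).edgeSet :=
  ⟨s(.inl 0, .inr i), W_adj_lr 0 i⟩

lemma val_eq_one_iff {x : Fin (m+3)} : (x : ℕ) = 1 ↔ x = 1 := by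
  rw [Fin.ext_iff]; simp

lemma cyc_adj (i : Fin (m+3)) : (cycleGraph (m+3)).Adj i (i+1) := by
  rw [cycleGraph_adj']
  right
  rw [add_sub_cancel_left, val_eq_one_iff]

def cyc (i : Fin (m+3)) : (W (m+3)).edgeSet :=
  ⟨s(.inr i, .inr (i+1)), W_adj_rr.mpr (cyc_adj i)⟩

lemma spoke_inj : Function.Injective (spoke (m := m)) := by
  intro i j h
  have := congrArg Subtype.val h
  simp only [spoke, Sym2.eq_iff] at this
  rcases this with ⟨-, h2⟩ | ⟨h1, -⟩
  · exact Sum.inr.inj h2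
  · exact absurd h1 (by simp)

lemma spoke_ne_cyc (i j : Fin (m+3)) : spoke i ≠ cyc j := by
  intro h
  have := congrArg Subtype.val h
  simp only [spoke, cyc, Sym2.eq_iff] at this
  rcases this with ⟨h1, -⟩ | ⟨h1, -⟩ <;> exact absurd h1 (by simp)

lemma cyc_inj : Function.Injective (cyc (m := m)) := by
  intro i j h
  have := congrArg Subtype.val h
  simp only [cyc, Sym2.eq_iff] at this
  rcases this with ⟨h1, -⟩ | ⟨h1, h2⟩
  · exact Sum.inr.inj h1
  · have e1 : i = j + 1 := Sum.inr.inj h1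
    have e2 : i + 1 = j := Sum.inr.inj h2
    exfalso
    apply ne_add_two j
    calc j = i + 1 := e2.symm
    _ = j + 1 + 1 := by rw [e1]
    _ = j + 2 := by rw [add_assoc, one_add_one]

lemma classify (e : (W (m+3)).edgeSet) :
    (∃ i, e = spoke i) ∨ (∃ i, e = cyc i) := by
  rcases W_edge_cases e.val e.prop with ⟨i, hi⟩ | ⟨i, j, hadj, hij⟩
  · exact Or.inl ⟨i, Subtype.ext hi⟩
  · right
    rw [cycleGraph_adj'] at hadj
    rcases hadj with h | h
    · have h' : i - j = 1 := val_eq_one_iff.mp h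
      have hji : i = j + 1 := by rw [← h']; exact (add_sub_cancel _ _).symm
      refine ⟨j, Subtype.ext ?_⟩
      rw [hij, hji]
      exact Sym2.eq_swap
    · have h' : j - i = 1 := val_eq_one_iff.mp h
      have hji : j = i + 1 := by rw [← h']; exact (add_sub_cancel _ _).symm
      exact ⟨i, Subtype.ext (by rw [hij, hji]; rfl)⟩

def colFun : Fin 1 ⊕ Fin (m+3) → Fin 1 ⊕ Fin (m+3) → Fin (m+3)
  | .inl _, .inl _ => 0
  | .inl _, .inr i => i
  | .inr i, .inl _ => i
  | .inr i, .inr j => if j = i + 1 then i + 2 else if i = j + 1 then j + 2 else 0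

lemma colFun_symm (a b : Fin 1 ⊕ Fin (m+3)) : colFun a b = colFun b a := by
  rcases a with x | i <;> rcases b with y | j <;> simp only [colFun]
  split_ifs with h1 h2 h2
  · exfalso
    apply ne_add_two i
    calc i = j + 1 := h2
    _ = i + 1 + 1 := by rw [h1]
    _ = i + 2 := by rw [add_assoc, one_add_one]
  · rfl
  · rfl
  · rfl

noncomputable def col (e : (W (m+3)).edgeSet) : Fin (m+3) :=
  Sym2.lift ⟨colFun, colFun_symm⟩ e.val

lemma col_spoke (i : Fin (m+3)) : col (spoke i) = i := by
  simp [col, spoke, colFun]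

lemma col_cyc (i : Fin (m+3)) : col (cyc i) = i + 2 := by
  simp [col, cyc, colFun]

lemma shared_spoke_cyc {i j : Fin (m+3)} (h : EdgeAdj (W (m+3)) (spoke i) (cyc j)) :
    i = j ∨ i = j + 1 := by
  obtain ⟨-, v, hv1, hv2⟩ := h
  simp only [spoke, cyc, Sym2.mem_iff] at hv1 hv2
  rcases hv1 with rfl | rfl
  · rcases hv2 with h | h <;> exact absurd h (by simp)
  · rcases hv2 with h | h
    · exact Or.inl (Sum.inr.inj h)
    · exact Or.inr (Sum.inr.inj h)

lemma col_proper : ∀ e f, EdgeAdj (W (m+3)) e f → col e ≠ col f := by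
  intro e f hadj
  rcases classify e with ⟨i, rfl⟩ | ⟨i, rfl⟩ <;> rcases classify f with ⟨j, rfl⟩ | ⟨j, rfl⟩
  · rw [col_spoke, col_spoke]
    exact fun h => hadj.1 (congrArg spoke h)
  · rw [col_spoke, col_cyc]
    rcases shared_spoke_cyc hadj with rfl | rfl
    · exact ne_add_two i
    · exact add_one_ne_add_two j
  · rw [col_cyc, col_spoke]
    have : j = i ∨ j = i + 1 := shared_spoke_cyc ⟨(spoke_ne_cyc j i),
      by obtain ⟨-, v, h1, h2⟩ := hadj; exact ⟨v, h2, h1⟩⟩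
    intro hc
    rcases this with rfl | rfl
    · exact ne_add_two j hc.symm
    · exact add_one_ne_add_two i hc.symm
  · rw [col_cyc, col_cyc]
    intro hc
    exact hadj.1 (congrArg cyc (add_right_cancel hc))

lemma edgeadj_spokes {i j : Fin (m+3)} (h : i ≠ j) :
    EdgeAdj (W (m+3)) (spoke i) (spoke j) :=
  ⟨fun hc => h (spoke_inj hc), .inl 0, by simp [spoke], by simp [spoke]⟩

lemma col_dom (i : Fin (m+3)) :
    ∃ e : (W (m+3)).edgeSet, ∀ f, col f = i → f = e ∨ EdgeAdj (W (m+3)) e f := by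
  refine ⟨spoke (i - 1), fun f hf => ?_⟩
  rcases classify f with ⟨j, rfl⟩ | ⟨j, rfl⟩
  · rw [col_spoke] at hf
    subst hf
    right
    apply edgeadj_spokes
    intro h
    exact l01 (sub_eq_self.mp h).symm
  · rw [col_cyc] at hf
    right
    have hj : j + 1 = i - 1 := by
      rw [← hf, ← one_add_one, ← add_assoc, add_sub_cancel_right]
    refine ⟨spoke_ne_cyc _ _, .inr (j+1), ?_, ?_⟩
    · rw [hj]; simp [spoke]
    · simp [cyc]

lemma mem_S : (m + 3) ∈ {n | ∃ c : (W (m+3)).edgeSet → Fin n, IsDomEdgeColoring (W (m+3)) c} :=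
  ⟨col, col_proper, col_dom⟩

lemma lower {k : ℕ} (c : (W (m+3)).edgeSet → Fin k) (hc : IsDomEdgeColoring (W (m+3)) c) :
    m + 3 ≤ k := by
  have hinj : Function.Injective (fun i : Fin (m+3) => c (spoke i)) := by
    intro i j h
    by_contra hne
    exact hc.1 _ _ (edgeadj_spokes hne) h
  simpa using Fintype.card_le_of_injective _ hinj

theorem key : domEdgeChrom (W (m+3)) = m + 3 := by
  apply le_antisymm
  · exact Nat.sInf_le mem_S
  · apply le_csInf ⟨m + 3, mem_S⟩
    rintro k ⟨c, hc⟩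
    exact lower c hc

end Wheel

/-- For `n ≥ 4`, the wheel `W_n = K_1 + C_{n-1}` has `χ'_dom(W_n) = n - 1`. -/
theorem stmt_6 (n : ℕ) (hn : 4 ≤ n) :
    domEdgeChrom (graphJoin (⊤ : SimpleGraph (Fin 1)) (SimpleGraph.cycleGraph (n - 1))) =
      n - 1 := by
  obtain ⟨m, hm⟩ : ∃ m, n - 1 = m + 3 := ⟨n - 4, by omega⟩
  rw [hm]
  exact Wheel.key
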